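/- For every integer L>1, the equation e^t − 1 − L·t = 0 has a unique solution t*(L) in (0,∞), and this solution satisfies ln L < t*(L) < 2·ln L. Moreover, setting N* = t*(L)/ln(1/ε) for 0<ε<1, one has 1/4 ≤ (1−ε^{N*})^L < 1. -/

import Mathlib

open Real Set

lemma exp_combo {x y : ℝ} (hxy : x ≠ y) {a b : ℝ} (ha : 0 < a) (hb : 0 < b)
    (hab : a + b = 1) : Real.exp (a*x + b*y) < a * Real.exp x + b * Real.exp y := by
  have := strictConvexOn_exp.2 (mem_univ x) (mem_univ y) hxy ha hb hab
  simpa [smul_eq_mul] using this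

/-- below a positive root of exp t = 1 + C t, exp s < 1 + C s -/
lemma root_sign_lt (C : ℝ) {t s : ℝ} (hs : 0 < s) (hst : s < t)
    (hroot : Real.exp t = 1 + C * t) : Real.exp s < 1 + C * s := by
  have ht : 0 < t := hs.trans hst
  have ha : 0 < s/t := by positivity
  have hb : 0 < 1 - s/t := by
    rw [sub_pos, div_lt_one ht]; exact hst
  have h := exp_combo (x := t) (y := 0) (ne_of_gt ht) ha hb (by ring)
  rw [Real.exp_zero] at h
  have hst' : s/t*t + (1 - s/t)*0 = s := by field_simp; ring
  rw [hst', hroot] at h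
  have : s/t * (1 + C*t) + (1 - s/t)*1 = 1 + C*s := by field_simp; ring
  linarith [this ▸ h]

/-- above a positive root of exp t = 1 + C t, exp s > 1 + C s -/
lemma root_sign_gt (C : ℝ) {t s : ℝ} (ht : 0 < t) (hst : t < s)
    (hroot : Real.exp t = 1 + C * t) : 1 + C * s < Real.exp s := by
  have hs : 0 < s := ht.trans hst
  have ha : 0 < t/s := by positivity
  have hb : 0 < 1 - t/s := by rw [sub_pos, div_lt_one hs]; exact hst
  have h := exp_combo (x := s) (y := 0) (ne_of_gt hs) ha hb (by ring)
  rw [Real.exp_zero] at h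
  have hts : t/s*s + (1 - t/s)*0 = t := by field_simp; ring
  rw [hts, hroot] at h
  -- 1 + C*t < (t/s) exp s + 1 - t/s  ⟹  C*t + t/s < (t/s) exp s ⟹ C*s + 1 < exp s
  have h2 : C*t + t/s < t/s * Real.exp s := by linarith
  have h3 : (C*s + 1) * (t/s) < (t/s) * Real.exp s := by
    have : (C*s + 1) * (t/s) = C*t + t/s := by field_simp
    linarith [this ▸ h2]
  have := (mul_lt_mul_iff_left₀ ha).mp (by linarith [h3] : (C*s+1)*(t/s) < Real.exp s * (t/s))
  linarith

lemma two_mul_log_lt (x : ℝ) (hx : 1 < x) : 2*x*Real.log x < x^2 - 1 := by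
  have hmono : StrictMonoOn (fun y : ℝ => y^2 - 1 - 2*y*Real.log y) (Set.Ici 1) := by
    apply strictMonoOn_of_deriv_pos (convex_Ici 1)
    · apply ContinuousOn.sub
      · exact (continuous_pow 2).continuousOn.sub continuousOn_const
      · apply ContinuousOn.mul (by fun_prop)
        intro y hy
        exact (Real.continuousAt_log (by simp at hy; linarith)).continuousWithinAt
    · intro y hy
      rw [interior_Ici] at hy
      have hy0 : (0:ℝ) < y := lt_trans one_pos hy
      have hd : HasDerivAt (fun y : ℝ => y^2 - 1 - 2*y*Real.log y)
          (2*y - (2*Real.log y + 2*y*(1/y))) y := by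
        have h2 : HasDerivAt (fun y:ℝ => y^2 - 1) (2*y) y := by
          simpa using ((hasDerivAt_pow 2 y).sub_const 1)
        have h3 : HasDerivAt (fun y:ℝ => 2*y) 2 y := by
          simpa using (hasDerivAt_id y).const_mul (2:ℝ)
        have h4 := h3.mul (Real.hasDerivAt_log (ne_of_gt hy0))
        have h5 : HasDerivAt (fun y:ℝ => 2*y*Real.log y) (2*Real.log y + 2*y*(1/y)) y := by
          exact h4.congr_deriv (by ring)
        exact h2.sub h5
      rw [hd.deriv]
      have hlog : Real.log y < y - 1 := Real.log_lt_sub_one_of_pos hy0 (ne_of_gt hy)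
      have : 2*y*(1/y) = 2 := by field_simp
      rw [this]
      linarith
  have h0 := hmono (self_mem_Ici) (mem_Ici.2 hx.le) hx
  simp at h0
  nlinarith [h0]

lemma f_neg_at_log (L : ℕ) (hL : 1 < L) :
    Real.exp (Real.log L) - 1 - (L:ℝ) * Real.log L < 0 := by
  have hLr : (1:ℝ) < (L:ℝ) := by exact_mod_cast hL
  have hL0 : (0:ℝ) < L := by linarith
  rw [Real.exp_log hL0]
  have h := Real.log_lt_sub_one_of_pos (x := 1/(L:ℝ)) (by positivity) (by
    rw [ne_eq, div_eq_one_iff_eq (by linarith)]; exact fun h => by simp [h.symm] at hLr)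
  rw [one_div, Real.log_inv] at h
  have h2 : 1 - (L:ℝ)⁻¹ < Real.log L := by linarith
  have h3 : (L:ℝ) * (1 - (L:ℝ)⁻¹) < (L:ℝ) * Real.log L := (mul_lt_mul_iff_right₀ hL0).mpr h2
  have h4 : (L:ℝ) * (1 - (L:ℝ)⁻¹) = L - 1 := by field_simp
  linarith [h4 ▸ h3]

lemma f_pos_at_2log (L : ℕ) (hL : 1 < L) :
    0 < Real.exp (2 * Real.log L) - 1 - (L:ℝ) * (2 * Real.log L) := by
  have hLr : (1:ℝ) < (L:ℝ) := by exact_mod_cast hL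
  have hL0 : (0:ℝ) < L := by linarith
  rw [two_mul, Real.exp_add, Real.exp_log hL0]
  have h := two_mul_log_lt (L:ℝ) hLr
  nlinarith [h]

set_option maxHeartbeats 1000000 in
theorem stmt5 (L : ℕ) (hL : 1 < L) (ε : ℝ) (hε : 0 < ε) (hε1 : ε < 1) :
    (∃! t : ℝ, 0 < t ∧ Real.exp t - 1 - (L : ℝ) * t = 0) ∧
    ∀ t : ℝ, 0 < t → Real.exp t - 1 - (L : ℝ) * t = 0 →
      Real.log L < t ∧ t < 2 * Real.log L ∧
      1 / 4 ≤ (1 - ε ^ (t / Real.log (1 / ε))) ^ L ∧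
      (1 - ε ^ (t / Real.log (1 / ε))) ^ L < 1 := by
  have hLr : (1:ℝ) < (L:ℝ) := by exact_mod_cast hL
  have hlogL : 0 < Real.log L := Real.log_pos hLr
  set f : ℝ → ℝ := fun t => Real.exp t - 1 - (L:ℝ) * t with hf
  have hfc : ContinuousOn f (Icc (Real.log L) (2 * Real.log L)) := by fun_prop
  have hfa : f (Real.log L) < 0 := f_neg_at_log L hL
  have hfb : 0 < f (2 * Real.log L) := f_pos_at_2log L hL
  obtain ⟨t₀, ht₀mem, ht₀⟩ := intermediate_value_Ioo (by linarith : Real.log L ≤ 2 * Real.log L)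
    hfc (⟨hfa, hfb⟩ : (0:ℝ) ∈ Ioo (f (Real.log L)) (f (2 * Real.log L)))
  have ht₀pos : 0 < t₀ := lt_trans hlogL ht₀mem.1
  have ht₀root : Real.exp t₀ = 1 + (L:ℝ) * t₀ := by
    have := ht₀; simp only [hf] at this; linarith
  -- any root equals t₀
  have huniq : ∀ s : ℝ, 0 < s → Real.exp s - 1 - (L:ℝ) * s = 0 → s = t₀ := by
    intro s hs hroot
    have hroot' : Real.exp s = 1 + (L:ℝ) * s := by linarith
    rcases lt_trichotomy s t₀ with h | h | h
    · exact absurd hroot' (ne_of_lt (root_sign_lt (L:ℝ) hs h ht₀root))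
    · exact h
    · exact absurd hroot' (ne_of_gt (root_sign_gt (L:ℝ) ht₀pos h ht₀root))
  constructor
  · exact ⟨t₀, ⟨ht₀pos, by simpa [hf] using ht₀⟩, fun s hs => huniq s hs.1 hs.2⟩
  intro t ht hroot
  have hteq : t = t₀ := huniq t ht hroot
  subst hteq
  -- rewrite ε ^ (t/log(1/ε)) = exp (-t)
  have hlogε : Real.log ε < 0 := Real.log_neg hε hε1
  have hpow : ε ^ (t / Real.log (1 / ε)) = Real.exp (-t) := by
    rw [Real.rpow_def_of_pos hε, one_div, Real.log_inv]
    have hne : Real.log ε ≠ 0 := ne_of_lt hlogε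
    congr 1
    rw [div_neg, mul_neg, neg_inj, mul_comm, div_mul_cancel₀ t hne]
  have hx : Real.exp (-t) = (1 + (L:ℝ) * t)⁻¹ := by
    rw [Real.exp_neg, ht₀root]
  have hden : (0:ℝ) < 1 + (L:ℝ) * t := by nlinarith
  have hxpos : 0 < Real.exp (-t) := Real.exp_pos _
  have hxlt : Real.exp (-t) < 1 := by
    rw [hx]; rw [inv_lt_one_iff₀]; right; nlinarith
  refine ⟨ht₀mem.1, ht₀mem.2, ?_, ?_⟩
  · rw [hpow]
    set x := Real.exp (-t) with hxdef
    have hxval : x = (1 + (L:ℝ) * t)⁻¹ := hx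
    rcases lt_or_ge L 4 with h4 | h4
    · interval_cases L
      · -- L = 2 : t > log 2 > 1/2
        have hlog2 : Real.log 2 > 0.6931471803 := Real.log_two_gt_d9
        have ht2 : (0.6931471803 : ℝ) < t := by
          have := ht₀mem.1; push_cast at this ⊢; linarith
        have : x < 1/2 := by
          rw [hxval]; rw [inv_lt_iff_one_lt_mul₀ (by push_cast; nlinarith)]
          push_cast; nlinarith
        nlinarith [sq_nonneg (1-x)]
      · -- L = 3 : t > log 3 > 1
        have hlog3 : (1:ℝ) < Real.log 3 := by
          rw [Real.lt_log_iff_exp_lt (by norm_num)]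
          calc Real.exp 1 < 2.7182818286 := Real.exp_one_lt_d9
            _ < 3 := by norm_num
        have ht3 : (1:ℝ) < t := by
          have := ht₀mem.1; push_cast at this; linarith
        have hxlt4 : x < 1/4 := by
          rw [hxval, inv_lt_iff_one_lt_mul₀ (by push_cast; nlinarith)]
          push_cast; nlinarith
        have h1 : (3:ℝ)/4 < 1 - x := by linarith
        have h2 : ((3:ℝ)/4)^3 ≤ (1-x)^3 := by
          apply pow_le_pow_left₀ (by norm_num) h1.le
        norm_num at h2 ⊢
        linarith
    · -- L ≥ 4 : Bernoulli
      have hL4 : (4:ℝ) ≤ (L:ℝ) := by exact_mod_cast h4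
      have hlog2 : Real.log 2 > 0.6931471803 := Real.log_two_gt_d9
      have hlog4 : Real.log 4 ≤ Real.log L := by
        apply Real.log_le_log (by norm_num); exact_mod_cast (by exact_mod_cast h4 : (4:ℕ) ≤ L)
      have hlog4' : (1.386:ℝ) < Real.log 4 := by
        have : (4:ℝ) = 2^2 := by norm_num
        rw [this, Real.log_pow]; push_cast; linarith
      have ht4 : (1.386:ℝ) < t := by linarith [ht₀mem.1]
      -- L*x < 1/t < 3/4
      have hLx : (L:ℝ) * x < 3/4 := by
        have h0 : (L:ℝ)*x = (L:ℝ)/(1+(L:ℝ)*t) := by rw [hxval]; ring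
        rw [h0, div_lt_iff₀ hden]
        have h5 : (1.386:ℝ)*(L:ℝ) < (L:ℝ)*t := by
          rw [mul_comm]; exact mul_lt_mul_of_pos_left ht4 (by linarith)
        linarith
      have hbern : 1 + (L:ℕ) * (-x) ≤ (1 + (-x))^(L:ℕ) :=
        one_add_mul_le_pow (by linarith : (-2:ℝ) ≤ -x) L
      push_cast at hbern
      have : (1:ℝ)/4 ≤ 1 - (L:ℝ)*x := by linarith
      calc (1:ℝ)/4 ≤ 1 + (L:ℝ)*(-x) := by linarith
        _ ≤ (1 + -x)^L := hbern
        _ = (1 - x)^L := by ring_nf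
  · rw [hpow]; exact pow_lt_one₀ (by linarith) (by linarith) (by omega)
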